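/- Let n ≥ 2 be even, let 0 < a_1 ≤ a_2 ≤ … ≤ a_n, and let A_1,…,A_{n/2} ≥ 0 with at least one A_k ≠ 0. Define the polynomial P(x) = (x+a_1)(x+a_2)⋯(x+a_n) + Σ_{k=1}^{n/2} A_k x^{2k−1}. Then P has exactly one real root in the open interval (−∞, −a_n) and exactly one real root in the open interval (−a_1, 0). -/

import Mathlib

open Finset

lemma aux_prod_lt_prod {ι : Type*} (s : Finset ι) (hs : s.Nonempty) (f g : ι → ℝ)
    (h0 : ∀ i ∈ s, 0 ≤ f i) (h : ∀ i ∈ s, f i < g i) :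
    ∏ i ∈ s, f i < ∏ i ∈ s, g i := by
  have hg : 0 < ∏ i ∈ s, g i :=
    Finset.prod_pos fun i hi => lt_of_le_of_lt (h0 i hi) (h i hi)
  by_cases hz : ∃ i ∈ s, f i = 0
  · obtain ⟨j, hj, hfj⟩ := hz
    rw [Finset.prod_eq_zero hj hfj]
    exact hg
  · push_neg at hz
    exact Finset.prod_lt_prod_of_nonempty
      (fun i hi => lt_of_le_of_ne (h0 i hi) (Ne.symm (hz i hi))) h hs

theorem lemma2_even_P_roots
    (n : ℕ) (hn : 2 ≤ n) (heven : Even n)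
    (a : Fin n → ℝ) (hpos : ∀ i, 0 < a i) (hmono : Monotone a)
    (A : ℕ → ℝ) (hA : ∀ k ∈ Finset.Icc 1 (n / 2), 0 ≤ A k)
    (hA' : ∃ k ∈ Finset.Icc 1 (n / 2), A k ≠ 0)
    (P : ℝ → ℝ)
    (hP : ∀ x, P x = (∏ i, (x + a i)) +
      ∑ k ∈ Finset.Icc 1 (n / 2), A k * x ^ (2 * k - 1)) :
    (∃! x, x ∈ Set.Iio (-(a ⟨n - 1, by omega⟩)) ∧ P x = 0) ∧
    (∃! x, x ∈ Set.Ioo (-(a ⟨0, by omega⟩)) 0 ∧ P x = 0) := by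
  obtain ⟨k0, hk0mem, hk0ne⟩ := hA'
  have hk0pos : 0 < A k0 := lt_of_le_of_ne (hA k0 hk0mem) (Ne.symm hk0ne)
  set b : ℝ := a ⟨n - 1, by omega⟩ with hbdef
  set c : ℝ := a ⟨0, by omega⟩ with hcdef
  have hb0 : 0 < b := hpos _
  have hc0 : 0 < c := hpos _
  have hle_b : ∀ i, a i ≤ b := fun i => hmono (by simp [Fin.le_def]; omega)
  have hc_le : ∀ i, c ≤ a i := fun i => hmono (by simp [Fin.le_def])
  have hne : (Finset.univ : Finset (Fin n)).Nonempty := ⟨⟨0, by omega⟩, mem_univ _⟩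
  have hexp : ∀ k ∈ Finset.Icc 1 (n / 2),
      1 ≤ k ∧ (2 * k - 1) + (n - (2 * k - 1)) = n ∧ 1 ≤ n - (2 * k - 1) := by
    intro k hk
    rw [Finset.mem_Icc] at hk
    obtain ⟨m, hm⟩ := heven
    omega
  have hoddpow : ∀ k ∈ Finset.Icc 1 (n / 2), ∀ t : ℝ,
      (-t) ^ (2 * k - 1) = -(t ^ (2 * k - 1)) := by
    intro k hk t
    rw [Finset.mem_Icc] at hk
    exact Odd.neg_pow ⟨k - 1, by omega⟩ t
  -- ====== Part 2 : root in (-c, 0) ======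
  set g : ℝ → ℝ := fun t => (∏ i, (a i - t)) -
      ∑ k ∈ Finset.Icc 1 (n / 2), A k * t ^ (2 * k - 1) with hgdef
  have hPg : ∀ t : ℝ, P (-t) = g t := by
    intro t
    rw [hP, hgdef]
    have h1 : ∏ i, (-t + a i) = ∏ i, (a i - t) :=
      Finset.prod_congr rfl fun i _ => by ring
    have h2 : ∑ k ∈ Finset.Icc 1 (n / 2), A k * (-t) ^ (2 * k - 1)
        = ∑ k ∈ Finset.Icc 1 (n / 2), -(A k * t ^ (2 * k - 1)) := by
      refine Finset.sum_congr rfl fun k hk => ?_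
      rw [hoddpow k hk t]; ring
    rw [h1, h2, Finset.sum_neg_distrib]
    ring
  have hg0 : 0 < g 0 := by
    rw [hgdef]
    simp only
    have h2 : ∑ k ∈ Finset.Icc 1 (n / 2), A k * (0:ℝ) ^ (2 * k - 1) = 0 := by
      refine Finset.sum_eq_zero fun k hk => ?_
      rw [zero_pow (by have := (hexp k hk).1; omega), mul_zero]
    rw [h2, sub_zero]
    exact Finset.prod_pos fun i _ => by linarith [hc_le i, hpos i, hc0]
  have hgc : g c < 0 := by
    rw [hgdef]
    simp only
    have h1 : ∏ i, (a i - c) = 0 :=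
      Finset.prod_eq_zero (Finset.mem_univ (⟨0, by omega⟩ : Fin n)) (by rw [← hcdef]; ring)
    have h2 : 0 < ∑ k ∈ Finset.Icc 1 (n / 2), A k * c ^ (2 * k - 1) := by
      refine Finset.sum_pos' (fun k hk => mul_nonneg (hA k hk) (by positivity)) ?_
      exact ⟨k0, hk0mem, mul_pos hk0pos (by positivity)⟩
    linarith
  have hganti : StrictAntiOn g (Set.Icc 0 c) := by
    intro t1 h1 t2 h2 hlt
    have hprod : ∏ i, (a i - t2) < ∏ i, (a i - t1) := by
      refine aux_prod_lt_prod _ hne _ _ (fun i _ => ?_) (fun i _ => by linarith)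
      have := hc_le i
      have := h2.2
      linarith
    have hsum : ∑ k ∈ Finset.Icc 1 (n / 2), A k * t1 ^ (2 * k - 1)
        ≤ ∑ k ∈ Finset.Icc 1 (n / 2), A k * t2 ^ (2 * k - 1) := by
      refine Finset.sum_le_sum fun k hk => ?_
      exact mul_le_mul_of_nonneg_left (pow_le_pow_left₀ h1.1 hlt.le _) (hA k hk)
    rw [hgdef]
    simp only
    linarith
  have hgcont : Continuous g := by
    rw [hgdef]
    refine Continuous.sub ?_ ?_
    · exact continuous_finset_prod _ fun i _ => continuous_const.sub continuous_id
    · exact continuous_finset_sum _ fun k _ => continuous_const.mul (continuous_pow _)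
  have hIVT2 : (0:ℝ) ∈ g '' Set.Ioo 0 c := by
    refine intermediate_value_Ioo' hc0.le hgcont.continuousOn ?_
    exact ⟨hgc, hg0⟩
  obtain ⟨t2, ht2mem, ht2⟩ := hIVT2
  have part2 : ∃! x, x ∈ Set.Ioo (-(a ⟨0, by omega⟩)) 0 ∧ P x = 0 := by
    refine ⟨-t2, ⟨⟨by rw [← hcdef]; linarith [ht2mem.2], by linarith [ht2mem.1]⟩, ?_⟩, ?_⟩
    · rw [hPg t2, ht2]
    · rintro y ⟨⟨hy1, hy2⟩, hy0⟩
      rw [← hcdef] at hy1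
      have hgy : g (-y) = 0 := by rw [← hPg (-y), neg_neg, hy0]
      have : -y = t2 := by
        refine hganti.injOn ⟨by linarith, by linarith⟩
          ⟨ht2mem.1.le, ht2mem.2.le⟩ (by rw [hgy, ht2])
      linarith
  -- ====== Part 1 : root in (-∞, -b) ======
  set φ : ℝ → ℝ := fun t => (∏ i, (1 - a i / t)) -
      ∑ k ∈ Finset.Icc 1 (n / 2), A k / t ^ (n - (2 * k - 1)) with hφdef
  have hPφ : ∀ t : ℝ, 0 < t → P (-t) = t ^ n * φ t := by
    intro t ht
    rw [hP, hφdef]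
    simp only
    have h1 : ∏ i, (-t + a i) = t ^ n * ∏ i, (1 - a i / t) := by
      calc ∏ i, (-t + a i) = ∏ i : Fin n, (-1 * (t * (1 - a i / t))) :=
            Finset.prod_congr rfl fun i _ => by field_simp; ring
        _ = (-1) ^ n * (t ^ n * ∏ i, (1 - a i / t)) := by
            rw [Finset.prod_mul_distrib, Finset.prod_mul_distrib, Finset.prod_const,
              Finset.prod_const, Finset.card_univ, Fintype.card_fin]
        _ = t ^ n * ∏ i, (1 - a i / t) := by rw [heven.neg_one_pow]; ring
    have h2 : ∑ k ∈ Finset.Icc 1 (n / 2), A k * (-t) ^ (2 * k - 1)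
        = ∑ k ∈ Finset.Icc 1 (n / 2), -(t ^ n * (A k / t ^ (n - (2 * k - 1)))) := by
      refine Finset.sum_congr rfl fun k hk => ?_
      obtain ⟨hk1, hsum, hge1⟩ := hexp k hk
      rw [hoddpow k hk t]
      have htn : t ^ n = t ^ (2 * k - 1) * t ^ (n - (2 * k - 1)) := by
        rw [← pow_add, hsum]
      rw [htn]
      have hne' : t ^ (n - (2 * k - 1)) ≠ 0 := pow_ne_zero _ (ne_of_gt ht)
      field_simp
    rw [h1, h2, Finset.sum_neg_distrib, ← Finset.mul_sum]
    ring
  have hφmono : StrictMonoOn φ (Set.Ici b) := by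
    intro t1 h1 t2 h2 hlt
    have ht1 : 0 < t1 := lt_of_lt_of_le hb0 h1
    have ht2 : 0 < t2 := lt_trans ht1 hlt
    have hprod : ∏ i, (1 - a i / t1) < ∏ i, (1 - a i / t2) := by
      refine aux_prod_lt_prod _ hne _ _ (fun i _ => ?_) (fun i _ => ?_)
      · have hai : a i ≤ t1 := le_trans (hle_b i) h1
        have : a i / t1 ≤ 1 := (div_le_one ht1).mpr hai
        linarith
      · have : a i / t2 < a i / t1 := div_lt_div_of_pos_left (hpos i) ht1 hlt
        linarith
    have hsum : ∑ k ∈ Finset.Icc 1 (n / 2), A k / t2 ^ (n - (2 * k - 1))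
        ≤ ∑ k ∈ Finset.Icc 1 (n / 2), A k / t1 ^ (n - (2 * k - 1)) := by
      refine Finset.sum_le_sum fun k hk => ?_
      have h0 := hA k hk
      gcongr
    rw [hφdef]
    simp only
    linarith
  have hφb : φ b < 0 := by
    rw [hφdef]
    simp only
    have h1 : ∏ i, (1 - a i / b) = 0 := by
      refine Finset.prod_eq_zero (Finset.mem_univ (⟨n - 1, by omega⟩ : Fin n)) ?_
      rw [← hbdef, div_self (ne_of_gt hb0)]
      ring
    have h2 : 0 < ∑ k ∈ Finset.Icc 1 (n / 2), A k / b ^ (n - (2 * k - 1)) := by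
      refine Finset.sum_pos' (fun k hk => div_nonneg (hA k hk) (by positivity)) ?_
      exact ⟨k0, hk0mem, div_pos hk0pos (by positivity)⟩
    linarith
  set S : ℝ := ∑ k ∈ Finset.Icc 1 (n / 2), A k with hSdef
  have hS : 0 < S := by
    have : A k0 ≤ S := Finset.single_le_sum (fun k hk => hA k hk) hk0mem
    linarith
  set T : ℝ := max (2 * n * b) (max 1 (4 * S)) with hTdef
  have hT1 : (1:ℝ) ≤ T := le_trans (le_max_left _ _) (le_max_right _ _)
  have hT4S : 4 * S ≤ T := le_trans (le_max_right _ _) (le_max_right _ _)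
  have hTn : 2 * (n:ℝ) * b ≤ T := le_max_left _ _
  have hT0 : (0:ℝ) < T := by linarith
  have hn2 : (2:ℝ) ≤ (n:ℝ) := by exact_mod_cast hn
  have hbT : b < T := by nlinarith
  have hφT : 0 < φ T := by
    have h0fac : 0 ≤ 1 - b / T := by
      have : b / T ≤ 1 := (div_le_one hT0).mpr hbT.le
      linarith
    have hprodT : (1 - b / T) ^ n ≤ ∏ i, (1 - a i / T) := by
      calc (1 - b / T) ^ n = ∏ _i : Fin n, (1 - b / T) := by
            rw [Finset.prod_const, Finset.card_univ, Fintype.card_fin]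
        _ ≤ ∏ i, (1 - a i / T) := by
            refine Finset.prod_le_prod (fun _ _ => h0fac) (fun i _ => ?_)
            have h := (div_le_div_iff_of_pos_right hT0).mpr (hle_b i)
            linarith
    have hBern : 1 - (n:ℝ) * (b / T) ≤ (1 - b / T) ^ n := by
      have h := one_add_mul_le_pow (a := -(b / T)) (by nlinarith) n
      calc 1 - (n:ℝ) * (b / T) = 1 + (n:ℝ) * (-(b / T)) := by ring
        _ ≤ (1 + -(b / T)) ^ n := h
        _ = (1 - b / T) ^ n := by ring_nf
    have hnbT : (n:ℝ) * (b / T) ≤ 1 / 2 := by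
      have h : (n:ℝ) * (b / T) = (n * b) / T := by ring
      rw [h, div_le_iff₀ hT0]
      linarith
    have hsumT : ∑ k ∈ Finset.Icc 1 (n / 2), A k / T ^ (n - (2 * k - 1)) ≤ 1 / 4 := by
      have hstep : ∑ k ∈ Finset.Icc 1 (n / 2), A k / T ^ (n - (2 * k - 1))
          ≤ ∑ k ∈ Finset.Icc 1 (n / 2), A k / T := by
        refine Finset.sum_le_sum fun k hk => ?_
        have h0 := hA k hk
        gcongr
        exact le_self_pow₀ hT1 (by have := (hexp k hk).2.2; omega)
      have hST : ∑ k ∈ Finset.Icc 1 (n / 2), A k / T = S / T := by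
        rw [hSdef, Finset.sum_div]
      rw [hST] at hstep
      have : S / T ≤ 1 / 4 := by
        rw [div_le_iff₀ hT0]
        linarith
      linarith
    rw [hφdef]
    simp only
    linarith [hprodT, hBern, hnbT, hsumT]
  have hφcont : ContinuousOn φ (Set.Icc b T) := by
    rw [hφdef]
    refine ContinuousOn.sub ?_ ?_
    · refine continuousOn_finset_prod _ fun i _ => ?_
      exact continuousOn_const.sub (continuousOn_const.div continuousOn_id
        (fun t ht => ne_of_gt (lt_of_lt_of_le hb0 ht.1)))
    · refine continuousOn_finset_sum _ fun k hk => ?_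
      exact continuousOn_const.div ((continuous_pow _).continuousOn)
        (fun t ht => pow_ne_zero _ (ne_of_gt (lt_of_lt_of_le hb0 ht.1)))
  have hIVT1 : (0:ℝ) ∈ φ '' Set.Ioo b T :=
    intermediate_value_Ioo hbT.le hφcont ⟨hφb, hφT⟩
  obtain ⟨t1, ht1mem, ht1⟩ := hIVT1
  have ht1pos : 0 < t1 := lt_trans hb0 ht1mem.1
  have part1 : ∃! x, x ∈ Set.Iio (-(a ⟨n - 1, by omega⟩)) ∧ P x = 0 := by
    refine ⟨-t1, ⟨?_, ?_⟩, ?_⟩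
    · rw [← hbdef]
      simp only [Set.mem_Iio]
      linarith [ht1mem.1]
    · rw [hPφ t1 ht1pos, ht1, mul_zero]
    · rintro y ⟨hy1, hy0⟩
      rw [← hbdef] at hy1
      simp only [Set.mem_Iio] at hy1
      have hypos : 0 < -y := by linarith
      have hφy : φ (-y) = 0 := by
        have h := hPφ (-y) hypos
        rw [neg_neg, hy0] at h
        have hne0 : (-y) ^ n ≠ 0 := pow_ne_zero _ (ne_of_gt hypos)
        rcases mul_eq_zero.mp h.symm with h' | h'
        · exact absurd h' hne0
        · exact h'
      have : -y = t1 := by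
        refine hφmono.injOn ?_ ?_ (by rw [hφy, ht1])
        · exact Set.mem_Ici.mpr (by linarith)
        · exact Set.mem_Ici.mpr ht1mem.1.le
      linarith
  exact ⟨part1, part2⟩
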